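/- Let |ψ₀⟩ and |ψ₁⟩ be pure states on registers (X,Y) such that the fidelity of their reduced states on X satisfies F(Tr_Y|ψ₀⟩⟨ψ₀|, Tr_Y|ψ₁⟩⟨ψ₁|) = ε. Then there exists a projective measurement {Π₀, Π₁, Π_⊥ = I − Π₀ − Π₁} on register X such that for each b ∈ {0,1}, ‖(Π_b ⊗ I_Y)|ψ_b⟩‖² ≥ 1 − √(2ε). -/

import Mathlib

open Matrix
open scoped ComplexOrder Kronecker
noncomputable section

/-- Square root of a matrix: the PSD square root if the matrix is PSD, else 0. -/
noncomputable def matSqrt {n : Type*} [Fintype n] [DecidableEq n]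
    (A : Matrix n n ℂ) : Matrix n n ℂ :=
  open scoped Classical in
  if h : A.PosSemidef then
    h.1.eigenvectorUnitary.1 * diagonal ((↑) ∘ (√·) ∘ h.1.eigenvalues) *
      (star h.1.eigenvectorUnitary : Matrix n n ℂ)
  else 0

/-- Trace norm ‖A‖₁ = Tr √(AᴴA). -/
noncomputable def traceNorm {n : Type*} [Fintype n] [DecidableEq n]
    (A : Matrix n n ℂ) : ℝ :=
  (Matrix.trace (matSqrt (Aᴴ * A))).re

/-- Trace distance TD(ρ,σ) = (1/2)‖ρ−σ‖₁. -/
noncomputable def TD {n : Type*} [Fintype n] [DecidableEq n]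
    (ρ σ : Matrix n n ℂ) : ℝ :=
  traceNorm (ρ - σ) / 2

/-- Uhlmann fidelity F(ρ,σ) = (Tr √(√σ ρ √σ))². -/
noncomputable def fidelity {n : Type*} [Fintype n] [DecidableEq n]
    (ρ σ : Matrix n n ℂ) : ℝ :=
  ((Matrix.trace (matSqrt (matSqrt σ * ρ * matSqrt σ))).re) ^ 2

/-- ρ is a density matrix: positive semidefinite with unit trace. -/
def IsDensity {n : Type*} [Fintype n] [DecidableEq n]
    (ρ : Matrix n n ℂ) : Prop :=
  ρ.PosSemidef ∧ ρ.trace = 1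

/-- The reduced state on X of a pure state on X ⊗ Y (Y traced out). -/
noncomputable def redX {X Y : Type*} [Fintype X] [Fintype Y]
    (ψ : X × Y → ℂ) : Matrix X X ℂ :=
  Matrix.of fun x x' => ∑ y, ψ (x, y) * (starRingEnd ℂ) (ψ (x', y))

namespace DistAux
set_option linter.unusedSectionVars false

variable {n : Type*} [Fintype n] [DecidableEq n]

noncomputable def qf (V M : Matrix n n ℂ) (i : n) : ℂ :=
  star (fun a => V a i) ⬝ᵥ (M *ᵥ fun a => V a i)

lemma qf_eq_diag (V M : Matrix n n ℂ) (i : n) :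
    qf V M i = (star V * M * V) i i := by
  simp only [qf, dotProduct, mulVec, Matrix.mul_apply, Matrix.star_apply, Pi.star_apply,
    Finset.mul_sum, Finset.sum_mul, dotProduct]
  rw [Finset.sum_comm]
  exact Finset.sum_congr rfl fun a _ => Finset.sum_congr rfl fun b _ => by ring

lemma trace_diagonal_mul (d : n → ℂ) (M : Matrix n n ℂ) :
    trace (diagonal d * M) = ∑ i, d i * M i i := by
  simp [trace, Matrix.diag, Matrix.diagonal_mul]

lemma trace_conj_diag_mul (V : Matrix n n ℂ) (d : n → ℂ) (M : Matrix n n ℂ) :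
    trace (V * diagonal d * star V * M) = ∑ i, d i * qf V M i := by
  have e1 : V * diagonal d * star V * M = (V * diagonal d) * (star V * M) := by
    rw [Matrix.mul_assoc]
  rw [e1, trace_mul_comm, Matrix.mul_assoc, ← Matrix.mul_assoc, ← Matrix.mul_assoc,
    trace_mul_comm, trace_diagonal_mul]
  exact Finset.sum_congr rfl fun i _ => by rw [qf_eq_diag]

lemma trace_conj_diag {V : Matrix n n ℂ} (hV : star V * V = 1) (d : n → ℂ) :
    trace (V * diagonal d * star V) = ∑ i, d i := by
  rw [Matrix.trace_mul_cycle, hV, one_mul, trace_diagonal]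

lemma trace_eq_sum_qf {V : Matrix n n ℂ} (hV : V * star V = 1) (M : Matrix n n ℂ) :
    trace M = ∑ i, qf V M i := by
  have h : trace M = trace (star V * M * V) := by
    rw [Matrix.trace_mul_cycle, hV, one_mul]
  rw [h]
  simp only [trace, Matrix.diag]
  exact Finset.sum_congr rfl fun i _ => (qf_eq_diag V M i).symm

lemma qf_one {V : Matrix n n ℂ} (hV : star V * V = 1) (i : n) : qf V 1 i = 1 := by
  rw [qf_eq_diag, Matrix.mul_one, hV, Matrix.one_apply_eq]

lemma qf_nonneg {M : Matrix n n ℂ} (hM : M.PosSemidef) (V : Matrix n n ℂ) (i : n) :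
    0 ≤ qf V M i := hM.dotProduct_mulVec_nonneg _

lemma qf_re_nonneg {M : Matrix n n ℂ} (hM : M.PosSemidef) (V : Matrix n n ℂ) (i : n) :
    0 ≤ (qf V M i).re := (Complex.nonneg_iff.mp (qf_nonneg hM V i)).1

lemma qf_sub (V M N : Matrix n n ℂ) (i : n) : qf V (M - N) i = qf V M i - qf V N i := by
  simp [qf, Matrix.sub_mulVec, dotProduct_sub]

lemma qf_add (V M N : Matrix n n ℂ) (i : n) : qf V (M + N) i = qf V M i + qf V N i := by
  simp [qf, Matrix.add_mulVec, dotProduct_add]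

lemma conj_mul {V : Matrix n n ℂ} (hV : star V * V = 1) (d e : n → ℂ) :
    (V * diagonal d * star V) * (V * diagonal e * star V)
      = V * diagonal (fun i => d i * e i) * star V := by
  have h : (V * diagonal d * star V) * (V * diagonal e * star V)
      = V * (diagonal d * (star V * V) * diagonal e) * star V := by
    simp only [Matrix.mul_assoc]
  rw [h, hV, Matrix.mul_one, diagonal_mul_diagonal]

lemma conj_conjTranspose (V : Matrix n n ℂ) (d : n → ℂ) :
    (V * diagonal d * star V)ᴴ = V * diagonal (fun i => star (d i)) * star V := by
  ext a b
  rw [conjTranspose_apply, Matrix.mul_apply, Matrix.mul_apply, star_sum]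
  refine Finset.sum_congr rfl fun c _ => ?_
  rw [Matrix.mul_diagonal, Matrix.mul_diagonal, Matrix.star_apply, Matrix.star_apply, star_mul',
    star_mul', star_star]
  ring

lemma conj_diag_entry {V : Matrix n n ℂ} (hV : star V * V = 1) (d : n → ℂ) (i : n) :
    qf V (V * diagonal d * star V) i = d i := by
  rw [qf_eq_diag]
  have h : star V * (V * diagonal d * star V) * V = diagonal d := by
    have h2 : star V * (V * diagonal d * star V) * V
        = (star V * V) * diagonal d * (star V * V) := by simp only [Matrix.mul_assoc]
    rw [h2, hV, one_mul, Matrix.mul_one]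
  rw [h, diagonal_apply_eq]

lemma norm_qf_le {V : Matrix n n ℂ} (hV : star V * V = 1) (M : Matrix n n ℂ) (i : n) :
    ‖qf V M i‖ ≤ Real.sqrt ((qf V (Mᴴ * M) i).re) := by
  set v : n → ℂ := fun a => V a i with hv
  have hvv : star v ⬝ᵥ v = 1 := by
    have h := congrArg (fun N : Matrix n n ℂ => N i i) hV
    simp only [Matrix.mul_apply, Matrix.one_apply_eq, Matrix.star_apply] at h
    simpa [dotProduct, hv, Pi.star_apply] using h
  have hMv : star (M *ᵥ v) ⬝ᵥ (M *ᵥ v) = qf V (Mᴴ * M) i := by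
    simp only [qf, star_mulVec, ← Matrix.mulVec_mulVec, dotProduct_mulVec]
    rfl
  set Xv : EuclideanSpace ℂ n := (WithLp.equiv 2 _).symm v with hXv
  set Yv : EuclideanSpace ℂ n := (WithLp.equiv 2 _).symm (M *ᵥ v) with hYv
  have hinner : (inner ℂ Xv Yv : ℂ) = qf V M i :=
    (EuclideanSpace.inner_toLp_toLp v (M *ᵥ v)).trans (dotProduct_comm _ _)
  have hXnorm : ‖Xv‖ = 1 := by
    have h1 : (inner ℂ Xv Xv : ℂ) = 1 := ((EuclideanSpace.inner_toLp_toLp v v).trans (dotProduct_comm _ _)).trans hvv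
    have h2 : ‖Xv‖ ^ 2 = 1 := by
      have h3 := inner_self_eq_norm_sq (𝕜 := ℂ) Xv
      rw [h1] at h3
      simpa using h3.symm
    rw [← Real.sqrt_sq (norm_nonneg Xv), h2, Real.sqrt_one]
  have hYnorm : ‖Yv‖ ^ 2 = (qf V (Mᴴ * M) i).re := by
    have h1 : (inner ℂ Yv Yv : ℂ) = qf V (Mᴴ * M) i :=
      ((EuclideanSpace.inner_toLp_toLp _ _).trans (dotProduct_comm _ _)).trans hMv
    have h3 := inner_self_eq_norm_sq (𝕜 := ℂ) Yv
    rw [h1] at h3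
    simpa using h3.symm
  calc ‖qf V M i‖ = ‖(inner ℂ Xv Yv : ℂ)‖ := by rw [hinner]
    _ ≤ ‖Xv‖ * ‖Yv‖ := norm_inner_le_norm _ _
    _ = ‖Yv‖ := by rw [hXnorm, one_mul]
    _ = Real.sqrt (‖Yv‖ ^ 2) := (Real.sqrt_sq (norm_nonneg _)).symm
    _ = Real.sqrt ((qf V (Mᴴ * M) i).re) := by rw [hYnorm]


lemma trace_eq_sum_eigenvalues {M : Matrix n n ℂ} (hM : M.IsHermitian) :
    trace M = ↑(∑ i, hM.eigenvalues i) := by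
  have hU : star (hM.eigenvectorUnitary : Matrix n n ℂ) * (hM.eigenvectorUnitary : Matrix n n ℂ)
      = 1 := Matrix.mem_unitaryGroup_iff'.mp hM.eigenvectorUnitary.2
  conv_lhs => rw [hM.spectral_theorem, Unitary.conjStarAlgAut_apply]
  rw [trace_conj_diag hU, Complex.ofReal_sum]
  exact Finset.sum_congr rfl fun i _ => rfl

lemma spec_thm {M : Matrix n n ℂ} (hM : M.IsHermitian) :
    M = (hM.eigenvectorUnitary : Matrix n n ℂ) * diagonal (fun i => (hM.eigenvalues i : ℂ)) *
      star (hM.eigenvectorUnitary : Matrix n n ℂ) := by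
  conv_lhs => rw [hM.spectral_theorem, Unitary.conjStarAlgAut_apply]
  rfl

lemma matSqrt_eq {A : Matrix n n ℂ} (h : A.PosSemidef) :
    matSqrt A = (h.1.eigenvectorUnitary : Matrix n n ℂ) *
      diagonal ((↑) ∘ (√·) ∘ h.1.eigenvalues) * star (h.1.eigenvectorUnitary : Matrix n n ℂ) := by
  unfold matSqrt; rw [dif_pos h]

lemma matSqrt_psd {A : Matrix n n ℂ} (h : A.PosSemidef) : (matSqrt A).PosSemidef := by
  rw [matSqrt_eq h, Matrix.star_eq_conjTranspose]
  apply PosSemidef.mul_mul_conjTranspose_same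
  rw [posSemidef_diagonal_iff]
  exact fun i => Complex.zero_le_real.mpr (Real.sqrt_nonneg _)

lemma matSqrt_mul_self {A : Matrix n n ℂ} (h : A.PosSemidef) : matSqrt A * matSqrt A = A := by
  have hU : star (h.1.eigenvectorUnitary : Matrix n n ℂ) * (h.1.eigenvectorUnitary : Matrix n n ℂ)
      = 1 := Matrix.mem_unitaryGroup_iff'.mp h.1.eigenvectorUnitary.2
  rw [matSqrt_eq h, conj_mul hU]
  conv_rhs => rw [spec_thm h.1]
  refine congrArg (fun d => _ * diagonal d * _) ?_
  funext i
  show ((√(h.1.eigenvalues i) : ℝ) : ℂ) * ((√(h.1.eigenvalues i) : ℝ) : ℂ) = (h.1.eigenvalues i : ℂ)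
  rw [← Complex.ofReal_mul, Real.mul_self_sqrt (h.eigenvalues_nonneg i)]

lemma psd_trace_re_nonneg {M : Matrix n n ℂ} (hM : M.PosSemidef) : 0 ≤ (trace M).re := by
  rw [trace_eq_sum_eigenvalues hM.1, Complex.ofReal_re]
  exact Finset.sum_nonneg fun i _ => hM.eigenvalues_nonneg i

theorem key (ρ₀ ρ₁ : Matrix n n ℂ) (h0 : ρ₀.PosSemidef) (h1 : ρ₁.PosSemidef)
    (t0 : ρ₀.trace = 1) (t1 : ρ₁.trace = 1) :
    ∃ P0 P1 : Matrix n n ℂ,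
      P0.IsHermitian ∧ P0 * P0 = P0 ∧ P1.IsHermitian ∧ P1 * P1 = P1 ∧ P0 * P1 = 0 ∧
      1 - Real.sqrt (2 * fidelity ρ₀ ρ₁) ≤ (trace (P0 * ρ₀)).re ∧
      1 - Real.sqrt (2 * fidelity ρ₀ ρ₁) ≤ (trace (P1 * ρ₁)).re := by
  classical
  -- square roots
  set A := matSqrt ρ₀ with hAdef
  set B := matSqrt ρ₁ with hBdef
  have hA : A.PosSemidef := matSqrt_psd h0
  have hB : B.PosSemidef := matSqrt_psd h1
  have hAA : A * A = ρ₀ := matSqrt_mul_self h0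
  have hBB : B * B = ρ₁ := matSqrt_mul_self h1
  have hABct : (A * B)ᴴ = B * A := by rw [conjTranspose_mul, hA.1, hB.1]
  have hBABeq : (A * B)ᴴ * (A * B) = B * ρ₀ * B := by
    rw [hABct, ← hAA]; noncomm_ring
  have hBAB : (B * ρ₀ * B).PosSemidef := by
    rw [← hBABeq]; exact posSemidef_conjTranspose_mul_self _
  set G := matSqrt (B * ρ₀ * B) with hGdef
  have hG : G.PosSemidef := matSqrt_psd hBAB
  have hGG : G * G = B * ρ₀ * B := matSqrt_mul_self hBAB
  -- fidelity in terms of r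
  set r := (trace G).re with hrdef
  have hr0 : 0 ≤ r := psd_trace_re_nonneg hG
  have hfid : fidelity ρ₀ ρ₁ = r ^ 2 := by
    unfold fidelity
    rfl
  have hfid0 : (0:ℝ) ≤ fidelity ρ₀ ρ₁ := by rw [hfid]; positivity
  have hsqrtfid : Real.sqrt (fidelity ρ₀ ρ₁) = r := by rw [hfid, Real.sqrt_sq hr0]
  -- spectral decomposition of the difference
  set Δ := ρ₀ - ρ₁ with hΔdef
  have hΔ : Δ.IsHermitian := h0.1.sub h1.1
  set V : Matrix n n ℂ := ↑hΔ.eigenvectorUnitary with hVdef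
  have hV1 : star V * V = 1 := Matrix.mem_unitaryGroup_iff'.mp hΔ.eigenvectorUnitary.2
  have hV2 : V * star V = 1 := Matrix.mem_unitaryGroup_iff.mp hΔ.eigenvectorUnitary.2
  set lam := hΔ.eigenvalues with hlamdef
  have hspecΔ : Δ = V * diagonal (fun i => (lam i : ℂ)) * star V := spec_thm hΔ
  have hqfΔ : ∀ i, qf V Δ i = (lam i : ℂ) := fun i => by
    rw [hspecΔ]; exact conj_diag_entry hV1 _ i
  -- sums of positive/negative eigenvalues
  set Tp := ∑ i, (if 0 < lam i then lam i else 0) with hTpdef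
  set Tm := ∑ i, (if lam i < 0 then lam i else 0) with hTmdef
  have hsumlam : ∑ i, lam i = 0 := by
    have h : trace Δ = 0 := by rw [hΔdef, trace_sub, t0, t1, sub_self]
    have h2 : ((∑ i, lam i : ℝ) : ℂ) = 0 := by
      rw [← trace_eq_sum_eigenvalues hΔ]; exact h
    exact_mod_cast h2
  have per1 : ∀ i, (if 0 < lam i then lam i else 0) + (if lam i < 0 then lam i else 0)
      = lam i := by
    intro i
    rcases lt_trichotomy (lam i) 0 with h | h | h
    · rw [if_neg (by linarith), if_pos h, zero_add]
    · rw [if_neg (by rw [h]; exact lt_irrefl 0), if_neg (by rw [h]; exact lt_irrefl 0), add_zero, h]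
    · rw [if_pos h, if_neg (by linarith), add_zero]
  have per2 : ∀ i, (if 0 < lam i then lam i else 0) - (if lam i < 0 then lam i else 0)
      = |lam i| := by
    intro i
    rcases lt_trichotomy (lam i) 0 with h | h | h
    · rw [if_neg (by linarith), if_pos h, zero_sub, abs_of_neg h]
    · rw [if_neg (by rw [h]; exact lt_irrefl 0), if_neg (by rw [h]; exact lt_irrefl 0), sub_zero, h, abs_zero]
    · rw [if_pos h, if_neg (by linarith), sub_zero, abs_of_pos h]
  have hTpTm : Tp + Tm = 0 := by
    rw [hTpdef, hTmdef, ← Finset.sum_add_distrib,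
      Finset.sum_congr rfl fun i _ => per1 i]
    exact hsumlam
  have habs : Tp - Tm = ∑ i, |lam i| := by
    rw [hTpdef, hTmdef, ← Finset.sum_sub_distrib]
    exact Finset.sum_congr rfl fun i _ => per2 i
  -- the two projections
  set d0 : n → ℂ := fun i => if 0 < lam i then 1 else 0 with hd0def
  set d1 : n → ℂ := fun i => if lam i < 0 then 1 else 0 with hd1def
  set P0 := V * diagonal d0 * star V with hP0def
  set P1 := V * diagonal d1 * star V with hP1def
  have herm0 : P0.IsHermitian := by
    rw [Matrix.IsHermitian, hP0def, conj_conjTranspose]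
    have hfun : (fun i => star (d0 i)) = d0 := by
      funext i; by_cases h : 0 < lam i <;> simp [hd0def, h]
    rw [hfun]
  have herm1 : P1.IsHermitian := by
    rw [Matrix.IsHermitian, hP1def, conj_conjTranspose]
    have hfun : (fun i => star (d1 i)) = d1 := by
      funext i; by_cases h : lam i < 0 <;> simp [hd1def, h]
    rw [hfun]
  have idem0 : P0 * P0 = P0 := by
    rw [hP0def, conj_mul hV1]
    have hfun : (fun i => d0 i * d0 i) = d0 := by
      funext i; by_cases h : 0 < lam i <;> simp [hd0def, h]
    rw [hfun]
  have idem1 : P1 * P1 = P1 := by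
    rw [hP1def, conj_mul hV1]
    have hfun : (fun i => d1 i * d1 i) = d1 := by
      funext i; by_cases h : lam i < 0 <;> simp [hd1def, h]
    rw [hfun]
  have orth : P0 * P1 = 0 := by
    rw [hP0def, hP1def, conj_mul hV1]
    have hz : (fun i => d0 i * d1 i) = fun _ => (0:ℂ) := by
      funext i
      by_cases h : 0 < lam i
      · simp [hd0def, hd1def, h, not_lt.mpr h.le]
      · simp [hd0def, h]
    rw [hz]
    have : diagonal (fun _ : n => (0:ℂ)) = 0 := by
      ext a b; simp [diagonal_apply]
    rw [this, Matrix.mul_zero, Matrix.zero_mul]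
  -- trace identities
  have htrP0Δ : trace (P0 * Δ) = (Tp : ℂ) := by
    rw [hP0def, trace_conj_diag_mul, hTpdef, Complex.ofReal_sum]
    refine Finset.sum_congr rfl fun i _ => ?_
    rw [hqfΔ i]
    by_cases h : 0 < lam i <;> simp [hd0def, h]
  have htrP1Δ : trace (P1 * Δ) = (Tm : ℂ) := by
    rw [hP1def, trace_conj_diag_mul, hTmdef, Complex.ofReal_sum]
    refine Finset.sum_congr rfl fun i _ => ?_
    rw [hqfΔ i]
    by_cases h : lam i < 0 <;> simp [hd1def, h]
  have hreP0ρ₁ : 0 ≤ (trace (P0 * ρ₁)).re := by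
    rw [hP0def, trace_conj_diag_mul, Complex.re_sum]
    refine Finset.sum_nonneg fun i _ => ?_
    by_cases h : 0 < lam i
    · simpa [hd0def, h] using qf_re_nonneg h1 V i
    · simp [hd0def, h]
  have hreP1ρ₀ : 0 ≤ (trace (P1 * ρ₀)).re := by
    rw [hP1def, trace_conj_diag_mul, Complex.re_sum]
    refine Finset.sum_nonneg fun i _ => ?_
    by_cases h : lam i < 0
    · simpa [hd1def, h] using qf_re_nonneg h0 V i
    · simp [hd1def, h]
  have bound0 : Tp ≤ (trace (P0 * ρ₀)).re := by
    have hsplit : trace (P0 * Δ) = trace (P0 * ρ₀) - trace (P0 * ρ₁) := by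
      rw [hΔdef, Matrix.mul_sub, trace_sub]
    have := congrArg Complex.re hsplit
    rw [htrP0Δ, Complex.ofReal_re, Complex.sub_re] at this
    linarith
  have bound1 : -Tm ≤ (trace (P1 * ρ₁)).re := by
    have hsplit : trace (P1 * Δ) = trace (P1 * ρ₀) - trace (P1 * ρ₁) := by
      rw [hΔdef, Matrix.mul_sub, trace_sub]
    have := congrArg Complex.re hsplit
    rw [htrP1Δ, Complex.ofReal_re, Complex.sub_re] at this
    linarith
  -- Powers–Størmer
  set C := A - B with hCdef
  have hC : C.IsHermitian := hA.1.sub hB.1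
  set W : Matrix n n ℂ := ↑hC.eigenvectorUnitary with hWdef
  have hW1 : star W * W = 1 := Matrix.mem_unitaryGroup_iff'.mp hC.eigenvectorUnitary.2
  have hW2 : W * star W = 1 := Matrix.mem_unitaryGroup_iff.mp hC.eigenvectorUnitary.2
  set mu := hC.eigenvalues with hmudef
  have hspecC : C = W * diagonal (fun j => (mu j : ℂ)) * star W := spec_thm hC
  set sg : n → ℂ := fun j => if mu j < 0 then -1 else 1 with hsgdef
  set S := W * diagonal sg * star W with hSdef
  set absC := W * diagonal (fun j => ((|mu j| : ℝ) : ℂ)) * star W with habsCdef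
  have hsgmu : ∀ j, sg j * (mu j : ℂ) = ((|mu j| : ℝ) : ℂ) := by
    intro j
    by_cases h : mu j < 0
    · rw [abs_of_neg h]; push_cast; simp [hsgdef, h]
    · rw [abs_of_nonneg (not_lt.mp h)]; simp [hsgdef, h]
  have hSC : S * C = absC := by
    rw [hSdef, hspecC, conj_mul hW1, habsCdef]
    have hfun : (fun j => sg j * (mu j : ℂ)) = fun j => ((|mu j| : ℝ) : ℂ) :=
      funext hsgmu
    rw [hfun]
  have hCS : C * S = absC := by
    rw [hSdef, hspecC, conj_mul hW1, habsCdef]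
    have hfun : (fun j => (mu j : ℂ) * sg j) = fun j => ((|mu j| : ℝ) : ℂ) := by
      funext j; rw [mul_comm]; exact hsgmu j
    rw [hfun]
  have hSherm : Sᴴ = S := by
    rw [hSdef, conj_conjTranspose]
    have hfun : (fun j => star (sg j)) = sg := by
      funext j; by_cases h : mu j < 0 <;> simp [hsgdef, h]
    rw [hfun]
  have hSS1 : Sᴴ * S = 1 := by
    rw [hSherm, hSdef, conj_mul hW1]
    have hone : (fun j => sg j * sg j) = fun _ : n => (1:ℂ) := by
      funext j; by_cases h : mu j < 0 <;> simp [hsgdef, h]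
    rw [hone]
    have : diagonal (fun _ : n => (1:ℂ)) = 1 := Matrix.diagonal_one
    rw [this, Matrix.mul_one, hW2]
  have hqfSnorm : ∀ i, ‖qf V S i‖ ≤ 1 := by
    intro i
    have hle := norm_qf_le hV1 S i
    rw [hSS1, qf_one hV1] at hle
    simpa using hle
  -- Step 1 : re tr (Δ S) ≤ ∑ |λ|
  have hstep1 : (trace (Δ * S)).re ≤ Tp - Tm := by
    rw [habs]
    have htr : trace (Δ * S) = ∑ i, (lam i : ℂ) * qf V S i := by
      rw [hspecΔ, trace_conj_diag_mul]
    rw [htr, Complex.re_sum]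
    refine Finset.sum_le_sum fun i _ => ?_
    have hre : ((lam i : ℂ) * qf V S i).re = lam i * (qf V S i).re := by
      simp [Complex.mul_re]
    rw [hre]
    calc lam i * (qf V S i).re ≤ |lam i * (qf V S i).re| := le_abs_self _
      _ = |lam i| * |(qf V S i).re| := abs_mul _ _
      _ ≤ |lam i| * ‖qf V S i‖ := by
          refine mul_le_mul_of_nonneg_left ?_ (abs_nonneg _)
          exact Complex.abs_re_le_norm _
      _ ≤ |lam i| * 1 := mul_le_mul_of_nonneg_left (hqfSnorm i) (abs_nonneg _)
      _ = |lam i| := mul_one _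
  -- Step 2 : tr (Δ S) = tr (|C| (A+B))
  have hstep2 : trace (Δ * S) = trace (absC * (A + B)) := by
    have h2C : C * (A + B) + (A + B) * C = Δ + Δ := by
      rw [hΔdef, hCdef, ← hAA, ← hBB]; noncomm_ring
    have e1 : trace ((Δ + Δ) * S) = trace (Δ * S) + trace (Δ * S) := by
      rw [Matrix.add_mul, trace_add]
    have e2 : (Δ + Δ) * S = C * ((A + B) * S) + (A + B) * (C * S) := by
      rw [← h2C]; noncomm_ring
    have e3 : trace (C * ((A + B) * S)) = trace (absC * (A + B)) := by
      rw [trace_mul_comm, Matrix.mul_assoc, hSC, trace_mul_comm]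
    have e4 : trace ((A + B) * (C * S)) = trace (absC * (A + B)) := by
      rw [hCS, trace_mul_comm]
    have e5 : trace (Δ * S) + trace (Δ * S)
        = trace (absC * (A + B)) + trace (absC * (A + B)) := by
      rw [← e1, e2, trace_add, e3, e4]
    linear_combination e5 / 2
  -- Step 3 : re tr (C²) ≤ re tr (|C| (A+B))
  have hCCspec : C * C = W * diagonal (fun j => (mu j : ℂ) * (mu j : ℂ)) * star W := by
    conv_lhs => rw [hspecC]
    exact conj_mul hW1 _ _
  have hqfC : ∀ j, qf W C j = (mu j : ℂ) := fun j => by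
    rw [hspecC]; exact conj_diag_entry hW1 _ j
  have hstep3 : (trace (C * C)).re ≤ (trace (absC * (A + B))).re := by
    have htrCC : (trace (C * C)).re = ∑ j, mu j ^ 2 := by
      rw [hCCspec, trace_conj_diag]
      · have : ∀ j : n, (mu j : ℂ) * (mu j : ℂ) = ((mu j ^ 2 : ℝ) : ℂ) := by
          intro j; push_cast; ring
        rw [Finset.sum_congr rfl fun j _ => this j, ← Complex.ofReal_sum, Complex.ofReal_re]
      · exact hW1
    have htrabs : (trace (absC * (A + B))).re = ∑ j, |mu j| * (qf W (A + B) j).re := by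
      rw [habsCdef, trace_conj_diag_mul, Complex.re_sum]
      refine Finset.sum_congr rfl fun j _ => ?_
      simp [Complex.mul_re]
    rw [htrCC, htrabs]
    refine Finset.sum_le_sum fun j _ => ?_
    have hqA := qf_re_nonneg hA W j
    have hqB := qf_re_nonneg hB W j
    have hsubq : (mu j : ℂ) = qf W A j - qf W B j := by
      rw [← hqfC j, hCdef, qf_sub]
    have hre : mu j = (qf W A j).re - (qf W B j).re := by
      have := congrArg Complex.re hsubq
      simpa [Complex.sub_re] using this
    have hqadd : (qf W (A + B) j).re = (qf W A j).re + (qf W B j).re := by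
      rw [qf_add, Complex.add_re]
    have habsmu : |mu j| ≤ (qf W (A + B) j).re := by
      rw [hqadd]
      exact abs_le.2 ⟨by linarith, by linarith⟩
    nlinarith [abs_nonneg (mu j), sq_abs (mu j)]
  -- Step 4 : re tr (C²) = 2 - 2 re tr (A B)
  have hstep4 : (trace (C * C)).re = 2 - 2 * (trace (A * B)).re := by
    have h4 : C * C = (A * A + B * B) - (A * B + B * A) := by
      rw [hCdef]; noncomm_ring
    have h5 : trace (C * C) = (1 + 1) - (trace (A * B) + trace (A * B)) := by
      rw [h4, trace_sub, trace_add, trace_add, hAA, hBB, t0, t1, trace_mul_comm B A]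
    have := congrArg Complex.re h5
    simp only [Complex.sub_re, Complex.add_re, Complex.one_re] at this
    linarith
  -- Step 5 : re tr (A B) ≤ r
  have hstep5 : (trace (A * B)).re ≤ r := by
    set U : Matrix n n ℂ := ↑hG.1.eigenvectorUnitary with hUdef
    have hU1 : star U * U = 1 := Matrix.mem_unitaryGroup_iff'.mp hG.1.eigenvectorUnitary.2
    have hU2 : U * star U = 1 := Matrix.mem_unitaryGroup_iff.mp hG.1.eigenvectorUnitary.2
    set s := hG.1.eigenvalues with hsdef
    have hs : ∀ j, 0 ≤ s j := fun j => hG.eigenvalues_nonneg j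
    have hspecG : G = U * diagonal (fun j => (s j : ℂ)) * star U := spec_thm hG.1
    have hGGspec : G * G = U * diagonal (fun j => (s j : ℂ) * (s j : ℂ)) * star U := by
      conv_lhs => rw [hspecG]
      exact conj_mul hU1 _ _
    have hABG : (A * B)ᴴ * (A * B) = G * G := by rw [hBABeq, ← hGG]
    have hqnorm : ∀ j, ‖qf U (A * B) j‖ ≤ s j := by
      intro j
      have hle := norm_qf_le hU1 (A * B) j
      rw [hABG, hGGspec, conj_diag_entry hU1] at hle
      have : ((s j : ℂ) * (s j : ℂ)).re = s j * s j := by simp [Complex.mul_re]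
      rw [this, Real.sqrt_mul_self (hs j)] at hle
      exact hle
    have hr : r = ∑ j, s j := by
      rw [hrdef, trace_eq_sum_eigenvalues hG.1, Complex.ofReal_re]
    calc (trace (A * B)).re ≤ ‖trace (A * B)‖ := Complex.re_le_norm _
      _ = ‖trace (A * B)‖ := rfl
      _ = ‖∑ j, qf U (A * B) j‖ := by rw [trace_eq_sum_qf hU2]
      _ ≤ ∑ j, ‖qf U (A * B) j‖ := norm_sum_le _ _
      _ ≤ ∑ j, s j := Finset.sum_le_sum fun j _ => hqnorm j
      _ = r := hr.symm
  -- assemble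
  have hre2 := congrArg Complex.re hstep2
  have hmain : 2 - 2 * r ≤ Tp - Tm := by linarith
  have hTmTp : Tm = -Tp := by linarith
  have hTp : 1 - r ≤ Tp := by
    rw [hTmTp] at hmain; linarith
  have hsq2 : Real.sqrt (fidelity ρ₀ ρ₁) ≤ Real.sqrt (2 * fidelity ρ₀ ρ₁) :=
    Real.sqrt_le_sqrt (by linarith)
  have hfin : 1 - Real.sqrt (2 * fidelity ρ₀ ρ₁) ≤ Tp := by
    rw [hsqrtfid] at hsq2
    linarith
  exact ⟨P0, P1, herm0, idem0, herm1, idem1, orth,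
    by linarith, by linarith⟩

section Kron
variable {X Y : Type*} [Fintype X] [DecidableEq X] [Fintype Y] [DecidableEq Y]

lemma diag_conj_rect (N : Matrix X Y ℂ) (M : Matrix X X ℂ) (y : Y) :
    (Nᴴ * M * N) y y = star (fun x => N x y) ⬝ᵥ (M *ᵥ fun x => N x y) := by
  simp only [dotProduct, mulVec, Matrix.mul_apply, conjTranspose_apply, Pi.star_apply,
    Finset.mul_sum, Finset.sum_mul, dotProduct]
  rw [Finset.sum_comm]
  exact Finset.sum_congr rfl fun a _ => Finset.sum_congr rfl fun b _ => by ring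

lemma redX_eq (ψ : X × Y → ℂ) :
    redX ψ = (Matrix.of fun x y => ψ (x, y)) * (Matrix.of fun x y => ψ (x, y))ᴴ := by
  ext x x'
  simp [redX, Matrix.mul_apply, conjTranspose_apply]

lemma redX_posSemidef (ψ : X × Y → ℂ) : (redX ψ).PosSemidef := by
  rw [redX_eq]; exact posSemidef_self_mul_conjTranspose _

lemma norm_sq_re (z : ℂ) : (starRingEnd ℂ z * z).re = ‖z‖ ^ 2 := by
  rw [Complex.sq_norm, Complex.normSq_apply]
  simp [Complex.mul_re]

lemma redX_trace (ψ : X × Y → ℂ) (h : ∑ p, ‖ψ p‖ ^ 2 = 1) : (redX ψ).trace = 1 := by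
  have h1 : (redX ψ).trace = ∑ x, ∑ y, ψ (x, y) * starRingEnd ℂ (ψ (x, y)) := by
    simp [trace, Matrix.diag, redX]
  have h2 : ∀ z : ℂ, z * starRingEnd ℂ z = ((‖z‖ ^ 2 : ℝ) : ℂ) := fun z => by
    rw [mul_comm]
    have := norm_sq_re z
    have him : (starRingEnd ℂ z * z).im = 0 := by simp [Complex.mul_im]; ring
    apply Complex.ext
    · rw [this, Complex.ofReal_re]
    · rw [him, Complex.ofReal_im]
  rw [h1]
  have h3 : ∑ x, ∑ y, ψ (x, y) * starRingEnd ℂ (ψ (x, y))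
      = ((∑ p : X × Y, ‖ψ p‖ ^ 2 : ℝ) : ℂ) := by
    rw [Complex.ofReal_sum, Fintype.sum_prod_type]
    exact Finset.sum_congr rfl fun x _ => Finset.sum_congr rfl fun y _ => h2 _
  rw [h3, h, Complex.ofReal_one]

lemma dot_self_re (v : X → ℂ) : (star v ⬝ᵥ v).re = ∑ x, ‖v x‖ ^ 2 := by
  rw [dotProduct, Complex.re_sum]
  exact Finset.sum_congr rfl fun x _ => norm_sq_re (v x)

lemma sum_norm_sq_kron (P : Matrix X X ℂ) (hP : Pᴴ * P = P) (ψ : X × Y → ℂ) :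
    ∑ p, ‖((P ⊗ₖ (1 : Matrix Y Y ℂ)) *ᵥ ψ) p‖ ^ 2 = (trace (P * redX ψ)).re := by
  set N : Matrix X Y ℂ := Matrix.of fun x y => ψ (x, y) with hNdef
  have hentry : ∀ x y, ((P ⊗ₖ (1 : Matrix Y Y ℂ)) *ᵥ ψ) (x, y)
      = (P *ᵥ fun x' => ψ (x', y)) x := by
    intro x y
    simp only [mulVec, dotProduct, Fintype.sum_prod_type, kroneckerMap_apply, Matrix.one_apply]
    refine Finset.sum_congr rfl fun x' _ => ?_
    simp [mul_ite, ite_mul, Finset.sum_ite_eq, mul_assoc]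
  have key1 : ∀ v : X → ℂ, star (P *ᵥ v) ⬝ᵥ (P *ᵥ v) = star v ⬝ᵥ (P *ᵥ v) := by
    intro v
    have e : star (P *ᵥ v) ⬝ᵥ (P *ᵥ v) = star v ⬝ᵥ ((Pᴴ * P) *ᵥ v) := by
      simp only [star_mulVec, ← Matrix.mulVec_mulVec, dotProduct_mulVec]
    rw [e, hP]
  have htr : trace (P * redX ψ) = ∑ y, star (fun x => ψ (x, y)) ⬝ᵥ (P *ᵥ fun x => ψ (x, y)) := by
    rw [redX_eq, ← Matrix.mul_assoc, trace_mul_comm]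
    have e : Nᴴ * (P * N) = Nᴴ * P * N := by rw [Matrix.mul_assoc]
    rw [e]
    simp only [trace, Matrix.diag]
    exact Finset.sum_congr rfl fun y _ => diag_conj_rect N P y
  calc ∑ p, ‖((P ⊗ₖ (1 : Matrix Y Y ℂ)) *ᵥ ψ) p‖ ^ 2
      = ∑ x, ∑ y, ‖(P *ᵥ fun x' => ψ (x', y)) x‖ ^ 2 := by
        rw [Fintype.sum_prod_type]
        exact Finset.sum_congr rfl fun x _ => Finset.sum_congr rfl fun y _ => by
          rw [hentry]
    _ = ∑ y, ∑ x, ‖(P *ᵥ fun x' => ψ (x', y)) x‖ ^ 2 := Finset.sum_comm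
    _ = ∑ y, (star (fun x => ψ (x, y)) ⬝ᵥ (P *ᵥ fun x => ψ (x, y))).re := by
        refine Finset.sum_congr rfl fun y _ => ?_
        rw [← key1, dot_self_re]
    _ = (trace (P * redX ψ)).re := by rw [htr, Complex.re_sum]

end Kron
end DistAux

/-- if |ψ₀⟩, |ψ₁⟩ are pure states on (X,Y) whose reduced states on
X have fidelity ε, there is a projective measurement {P0, P1, I−P0−P1} on X
with ‖(Π_b ⊗ I)|ψ_b⟩‖² ≥ 1 − √(2ε) for each b. -/
theorem distinguishing_measurement_from_fidelity
    {X Y : Type*} [Fintype X] [DecidableEq X] [Fintype Y] [DecidableEq Y]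
    (ψ₀ ψ₁ : X × Y → ℂ)
    (h₀ : ∑ p, ‖ψ₀ p‖ ^ 2 = 1) (h₁ : ∑ p, ‖ψ₁ p‖ ^ 2 = 1)
    (ε : ℝ) (hε : fidelity (redX ψ₀) (redX ψ₁) = ε) :
    ∃ P0 P1 : Matrix X X ℂ,
      P0.IsHermitian ∧ P0 * P0 = P0 ∧
      P1.IsHermitian ∧ P1 * P1 = P1 ∧
      P0 * P1 = 0 ∧
      (∑ p, ‖((P0 ⊗ₖ (1 : Matrix Y Y ℂ)).mulVec ψ₀) p‖ ^ 2 ≥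
        1 - Real.sqrt (2 * ε)) ∧
      (∑ p, ‖((P1 ⊗ₖ (1 : Matrix Y Y ℂ)).mulVec ψ₁) p‖ ^ 2 ≥
        1 - Real.sqrt (2 * ε)) := by
  obtain ⟨P0, P1, herm0, idem0, herm1, idem1, orth, hb0, hb1⟩ :=
    DistAux.key (redX ψ₀) (redX ψ₁) (DistAux.redX_posSemidef ψ₀) (DistAux.redX_posSemidef ψ₁)
      (DistAux.redX_trace ψ₀ h₀) (DistAux.redX_trace ψ₁ h₁)
  refine ⟨P0, P1, herm0, idem0, herm1, idem1, orth, ?_, ?_⟩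
  · rw [ge_iff_le, DistAux.sum_norm_sq_kron P0 (by rw [herm0.eq]; exact idem0) ψ₀, ← hε]
    exact hb0
  · rw [ge_iff_le, DistAux.sum_norm_sq_kron P1 (by rw [herm1.eq]; exact idem1) ψ₁, ← hε]
    exact hb1
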